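/- Let (s_1,…,s_k) be an activation sequence yielding the maximal nested collection 𝒮 (that is, 𝒮_0 = ∅, 𝒮_{r+1} = μ_{s_{r+1}}(𝒮_r), and 𝒮_k = 𝒮), and index the members of 𝒮 as S_s (the smallest member containing s). If S_{s_i} and S_{s_{i+1}} are disjoint (the pair s_i, s_{i+1} is exchangeable), then the sequence obtained by swapping s_i and s_{i+1} is also an activation sequence yielding the same collection 𝒮. Moreover, any two activation sequences yielding the same maximal nested collection 𝒮 can be transformed into one another by successively swapping exchangeable adjacent pairs. -/

import Mathlib

open MvPolynomial

/-- Reachability inside a subset `U` of vertices, along edges of `E`. -/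
def ReachIn {n : ℕ} (E : Fin n → Fin n → Prop) (U : Finset (Fin n)) (a b : Fin n) : Prop :=
  Relation.ReflTransGen (fun x y => E x y ∧ x ∈ U ∧ y ∈ U) a b

/-- A nonempty subset `I` is strongly connected if any vertex of `I` can reach any
other vertex of `I` by a directed path staying inside `I`. -/
def StronglyConnected {n : ℕ} (E : Fin n → Fin n → Prop) (I : Finset (Fin n)) : Prop :=
  I.Nonempty ∧ ∀ a ∈ I, ∀ b ∈ I, ReachIn E I a b

open Classical in
/-- The strongly connected component of `x` in the induced subgraph on `U`. -/
noncomputable def scc {n : ℕ} (E : Fin n → Fin n → Prop) (U : Finset (Fin n)) (x : Fin n) :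
    Finset (Fin n) :=
  U.filter fun y => ReachIn E U x y ∧ ReachIn E U y x

/-- `S ⊕ j` : the strongly connected component of `S ∪ {j}` containing `j`. -/
noncomputable def oplus {n : ℕ} (E : Fin n → Fin n → Prop) (S : Finset (Fin n)) (j : Fin n) :
    Finset (Fin n) :=
  scc E (insert j S) j

/-- `S ⊖ j = (S ∪ {j}) − (S ⊕ j)`. -/
noncomputable def ominus {n : ℕ} (E : Fin n → Fin n → Prop) (S : Finset (Fin n)) (j : Fin n) :
    Finset (Fin n) :=
  insert j S \ oplus E S j

/-- A family of strongly connected subsets is nested if any two members are nested or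
disjoint, and any tuple of pairwise disjoint members are exactly the strongly connected
components of their union. -/
def Nested {n : ℕ} (E : Fin n → Fin n → Prop) (𝒮 : Finset (Finset (Fin n))) : Prop :=
  (∀ I ∈ 𝒮, StronglyConnected E I) ∧
  (∀ I ∈ 𝒮, ∀ J ∈ 𝒮, I ⊆ J ∨ J ⊆ I ∨ Disjoint I J) ∧
  (∀ 𝒯 ⊆ 𝒮, (∀ I ∈ 𝒯, ∀ J ∈ 𝒯, I ≠ J → Disjoint I J) →
    ∀ I ∈ 𝒯, ∀ x ∈ I, scc E (𝒯.sup id) x = I)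

/-- The support of a collection: the union of its members. -/
def nsupport {n : ℕ} (𝒮 : Finset (Finset (Fin n))) : Finset (Fin n) := 𝒮.sup id

/-- A nested collection is maximal (for its support) if the only nested collection with the
same support containing it is itself. -/
def MaximalNested {n : ℕ} (E : Fin n → Fin n → Prop) (𝒮 : Finset (Finset (Fin n))) : Prop :=
  Nested E 𝒮 ∧ ∀ 𝒮' : Finset (Finset (Fin n)),
    Nested E 𝒮' → nsupport 𝒮' = nsupport 𝒮 → 𝒮 ⊆ 𝒮' → 𝒮' = 𝒮

/-- Activation of the collection `𝒮` at a vertex `s`: add `(support 𝒮) ⊕ s` to `𝒮`. -/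
noncomputable def activate {n : ℕ} (E : Fin n → Fin n → Prop)
    (𝒮 : Finset (Finset (Fin n))) (s : Fin n) : Finset (Finset (Fin n)) :=
  insert (oplus E (nsupport 𝒮) s) 𝒮

open Classical in
/-- `S_s`: the smallest member of `𝒮` containing `s` (junk value `∅` if there is none). -/
noncomputable def minMem {n : ℕ} (𝒮 : Finset (Finset (Fin n))) (s : Fin n) :
    Finset (Fin n) :=
  if h : ∃ I, I ∈ 𝒮 ∧ s ∈ I ∧ ∀ J ∈ 𝒮, s ∈ J → I ⊆ J then h.choose else ∅

/-- `l` is an activation sequence yielding the collection `𝒮`. -/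
def IsActSeq {n : ℕ} (E : Fin n → Fin n → Prop) (l : List (Fin n))
    (𝒮 : Finset (Finset (Fin n))) : Prop :=
  l.Nodup ∧ l.toFinset = nsupport 𝒮 ∧ l.foldl (activate E) ∅ = 𝒮

/-- `l'` is obtained from `l` by swapping an adjacent exchangeable pair, i.e. a pair
`a, b` with `S_a` and `S_b` disjoint. -/
def SwapRel {n : ℕ} (𝒮 : Finset (Finset (Fin n))) (l l' : List (Fin n)) : Prop :=
  ∃ (l₁ l₂ : List (Fin n)) (a b : Fin n),
    l = l₁ ++ a :: b :: l₂ ∧ l' = l₁ ++ b :: a :: l₂ ∧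
    Disjoint (minMem 𝒮 a) (minMem 𝒮 b)



section AuxLemmas

variable {n : ℕ} {E : Fin n → Fin n → Prop} {U V : Finset (Fin n)} {a b x y : Fin n}

namespace ReachIn

theorem mono (hUV : U ⊆ V) (h : ReachIn E U a b) : ReachIn E V a b := by
  induction h with
  | refl => exact .refl
  | tail _ e ih => exact ih.tail ⟨e.1, hUV e.2.1, hUV e.2.2⟩

theorem trans (h : ReachIn E U a b) (h' : ReachIn E U b x) : ReachIn E U a x :=
  Relation.ReflTransGen.trans h h'

end ReachIn

theorem mem_scc : y ∈ scc E U x ↔ y ∈ U ∧ ReachIn E U x y ∧ ReachIn E U y x := by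
  classical
  rw [scc]; exact Finset.mem_filter

theorem self_mem_scc (hx : x ∈ U) : x ∈ scc E U x := mem_scc.2 ⟨hx, .refl, .refl⟩

theorem scc_subset : scc E U x ⊆ U := fun y hy => (mem_scc.1 hy).1

/-- Splitting a path in `insert a U` at `a`. -/
theorem reach_insert_split (h : ReachIn E (insert a U) x y) :
    ReachIn E U x y ∨ (ReachIn E (insert a U) x a ∧ ReachIn E (insert a U) a y) := by
  induction h with
  | refl => exact Or.inl .refl
  | @tail b c hxb e ih =>
    by_cases hc : c = a
    · subst hc; exact Or.inr ⟨hxb.tail e, .refl⟩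
    · by_cases hb : b = a
      · subst hb; exact Or.inr ⟨hxb, Relation.ReflTransGen.single e⟩
      · rcases ih with h1 | ⟨h1, h2⟩
        · exact Or.inl (h1.tail ⟨e.1, (Finset.mem_insert.1 e.2.1).resolve_left hb,
            (Finset.mem_insert.1 e.2.2).resolve_left hc⟩)
        · exact Or.inr ⟨h1, h2.tail e⟩

theorem scc_insert_eq (ha : a ∉ scc E (insert a U) x) (hx : x ∈ U) :
    scc E (insert a U) x = scc E U x := by
  ext y
  constructor
  · intro hy
    rw [mem_scc] at hy ⊢
    obtain ⟨hyU, hxy, hyx⟩ := hy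
    have hyne : y ≠ a := by rintro rfl; exact ha (mem_scc.2 ⟨hyU, hxy, hyx⟩)
    refine ⟨(Finset.mem_insert.1 hyU).resolve_left hyne, ?_, ?_⟩
    · rcases reach_insert_split hxy with h | ⟨h1, h2⟩
      · exact h
      · exact absurd (mem_scc.2 ⟨Finset.mem_insert_self a U, h1, h2.trans hyx⟩) ha
    · rcases reach_insert_split hyx with h | ⟨h1, h2⟩
      · exact h
      · exact absurd (mem_scc.2 ⟨Finset.mem_insert_self a U, hxy.trans h1, h2⟩) ha
  · intro hy
    rw [mem_scc] at hy ⊢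
    exact ⟨Finset.mem_insert_of_mem hy.1, hy.2.1.mono (Finset.subset_insert _ _),
      hy.2.2.mono (Finset.subset_insert _ _)⟩

theorem scc_symm (hy : y ∈ scc E U x) (hx : x ∈ U) : x ∈ scc E U y := by
  rw [mem_scc] at hy ⊢; exact ⟨hx, hy.2.2, hy.2.1⟩

theorem aux1 (h : ReachIn E U x y) : ReachIn E U y x → ReachIn E (scc E U x) x y := by
  induction h with
  | refl => intro _; exact .refl
  | @tail b c hxb e ih =>
    intro h'
    have hbx : ReachIn E U b x := Relation.ReflTransGen.head e h'
    have hb : b ∈ scc E U x := mem_scc.2 ⟨e.2.1, hxb, hbx⟩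
    have hc : c ∈ scc E U x := mem_scc.2 ⟨e.2.2, hxb.tail e, h'⟩
    exact (ih hbx).tail ⟨e.1, hb, hc⟩

theorem aux2 (h : ReachIn E U y x) : ReachIn E U x y → ReachIn E (scc E U x) y x := by
  induction h using Relation.ReflTransGen.head_induction_on with
  | refl => intro _; exact .refl
  | @head z w e hwx ih =>
    intro h'
    have hxw : ReachIn E U x w := h'.tail e
    have hz : z ∈ scc E U x := mem_scc.2 ⟨e.2.1, h', Relation.ReflTransGen.head e hwx⟩
    have hw : w ∈ scc E U x := mem_scc.2 ⟨e.2.2, hxw, hwx⟩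
    exact Relation.ReflTransGen.head ⟨e.1, hz, hw⟩ (ih hxw)

theorem scc_strongly_connected (hx : x ∈ U) : StronglyConnected E (scc E U x) := by
  refine ⟨⟨x, self_mem_scc hx⟩, fun a ha b hb => ?_⟩
  rw [mem_scc] at ha hb
  exact (aux2 ha.2.2 ha.2.1).trans (aux1 hb.2.1 hb.2.2)

/-- A strongly connected set meeting an scc is contained in it. -/
theorem sc_subset_scc {I : Finset (Fin n)} (hI : StronglyConnected E I) (hIU : I ⊆ U)
    {w : Fin n} (hwI : w ∈ I) (hw : w ∈ scc E U x) : I ⊆ scc E U x := by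
  intro y hy
  rw [mem_scc] at hw ⊢
  exact ⟨hIU hy, hw.2.1.trans ((hI.2 w hwI y hy).mono hIU),
    ((hI.2 y hy w hwI).mono hIU).trans hw.2.2⟩

variable {𝒮 𝒮₀ : Finset (Finset (Fin n))} {s j : Fin n} {l p q : List (Fin n)}

theorem mem_oplus : j ∈ oplus E U j := self_mem_scc (Finset.mem_insert_self _ _)

theorem oplus_subset : oplus E U j ⊆ insert j U := scc_subset

theorem subset_nsupport (h : U ∈ 𝒮) : U ⊆ nsupport 𝒮 := Finset.le_sup (f := id) h

theorem nsupport_insert : nsupport (insert U 𝒮) = U ∪ nsupport 𝒮 := Finset.sup_insert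

theorem nsupport_activate : nsupport (activate E 𝒮 s) = insert s (nsupport 𝒮) := by
  rw [activate, nsupport_insert]
  apply Finset.Subset.antisymm
  · exact Finset.union_subset (oplus_subset) (Finset.subset_insert _ _)
  · intro x hx
    rcases Finset.mem_insert.1 hx with rfl | hx
    · exact Finset.mem_union_left _ mem_oplus
    · exact Finset.mem_union_right _ hx

theorem nsupport_foldl :
    ∀ (l : List (Fin n)) (𝒮₀ : Finset (Finset (Fin n))),
      nsupport (l.foldl (activate E) 𝒮₀) = nsupport 𝒮₀ ∪ l.toFinset
  | [], 𝒮₀ => by simp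
  | s :: l, 𝒮₀ => by
    rw [List.foldl_cons, nsupport_foldl l, nsupport_activate, List.toFinset_cons]
    ext x; simp [or_comm, or_assoc, or_left_comm]

theorem nsupport_foldl_nil (l : List (Fin n)) :
    nsupport (l.foldl (activate E) ∅) = l.toFinset := by
  rw [nsupport_foldl]; simp [nsupport]

theorem subset_foldl (l : List (Fin n)) (𝒮₀ : Finset (Finset (Fin n))) :
    𝒮₀ ⊆ l.foldl (activate E) 𝒮₀ := by
  induction l generalizing 𝒮₀ with
  | nil => exact Finset.Subset.refl _
  | cons s l ih =>
    exact Finset.Subset.trans (Finset.subset_insert _ _) (ih (activate E 𝒮₀ s))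

theorem mem_of_foldl {J : Finset (Fin n)} :
    ∀ (l : List (Fin n)) (𝒮₀ : Finset (Finset (Fin n))),
      J ∈ l.foldl (activate E) 𝒮₀ → J ∈ 𝒮₀ ∨
        ∃ p u q, l = p ++ u :: q ∧ J = oplus E (nsupport (p.foldl (activate E) 𝒮₀)) u
  | [], 𝒮₀, h => Or.inl h
  | s :: l, 𝒮₀, h => by
    rcases mem_of_foldl l (activate E 𝒮₀ s) h with h' | ⟨p, u, q, rfl, hJ⟩
    · rcases Finset.mem_insert.1 h' with rfl | h''
      · exact Or.inr ⟨[], s, l, rfl, rfl⟩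
      · exact Or.inl h''
    · exact Or.inr ⟨s :: p, u, q, rfl, hJ⟩

theorem created_mem_foldl (h : l = p ++ s :: q) (𝒮₀ : Finset (Finset (Fin n))) :
    oplus E (nsupport (p.foldl (activate E) 𝒮₀)) s ∈ l.foldl (activate E) 𝒮₀ := by
  subst h
  rw [List.foldl_append, List.foldl_cons]
  exact subset_foldl _ _ (Finset.mem_insert_self _ _)

theorem prefix_toFinset_subset {p q p' q' : List (Fin n)} {s u : Fin n}
    (h : p ++ s :: q = p' ++ u :: q') (hlt : p.length < p'.length) :
    (p ++ [s]).toFinset ⊆ p'.toFinset := by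
  have h1 : (p ++ [s]).length = p.length + 1 := by simp
  have h2 : (p ++ s :: q).take (p.length + 1) = p ++ [s] := by
    have : p ++ s :: q = (p ++ [s]) ++ q := by simp
    rw [this, List.take_left' h1]
  have h3 : (p' ++ u :: q').take p'.length = p' := List.take_left' rfl
  have hpre : (p ++ [s]) <+: p' := by
    have h4 := List.take_prefix_take_left (l := p ++ s :: q)
      (show p.length + 1 ≤ p'.length from hlt)
    rw [h2, h, h3] at h4
    exact h4
  exact fun x hx => List.mem_toFinset.2 (hpre.sublist.subset (List.mem_toFinset.1 hx))

theorem minMem_spec (hex : ∃ I, I ∈ 𝒮 ∧ s ∈ I ∧ ∀ J ∈ 𝒮, s ∈ J → I ⊆ J) :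
    minMem 𝒮 s ∈ 𝒮 ∧ s ∈ minMem 𝒮 s ∧ ∀ J ∈ 𝒮, s ∈ J → minMem 𝒮 s ⊆ J := by
  rw [minMem, dif_pos hex]; exact hex.choose_spec

theorem toFinset_append_singleton (p : List (Fin n)) (s : Fin n) :
    (p ++ [s]).toFinset = insert s p.toFinset := by
  ext x; simp [or_comm]

/-- Main lemma: in a run, the set created at `s`'s step is the smallest member
of the final collection containing `s`. -/
theorem minMem_eq (hnd : l.Nodup) (hsplit : l = p ++ s :: q) :
    minMem (l.foldl (activate E) ∅) s = oplus E p.toFinset s := by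
  set 𝒮 := l.foldl (activate E) ∅ with h𝒮
  set C := oplus E p.toFinset s with hC
  have hTs : nsupport (p.foldl (activate E) ∅) = p.toFinset := nsupport_foldl_nil p
  have hC𝒮 : C ∈ 𝒮 := by
    have := created_mem_foldl (E := E) hsplit ∅
    rwa [hTs] at this
  have hsC : s ∈ C := mem_oplus
  have hsp : s ∉ p := by
    rw [hsplit] at hnd
    exact fun hs => (List.disjoint_of_nodup_append hnd) hs List.mem_cons_self
  have minprop : ∀ J ∈ 𝒮, s ∈ J → C ⊆ J := by
    intro J hJ hsJ
    rcases mem_of_foldl l ∅ hJ with h | ⟨p', u, q', heq, hJ'⟩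
    · exact absurd h (Finset.notMem_empty _)
    rw [nsupport_foldl_nil] at hJ'
    have heq' : p ++ s :: q = p' ++ u :: q' := hsplit.symm.trans heq
    rcases lt_trichotomy p.length p'.length with hlt | hlen | hgt
    · have hsub : (p ++ [s]).toFinset ⊆ p'.toFinset := prefix_toFinset_subset heq' hlt
      rw [toFinset_append_singleton] at hsub
      have hCU : C ⊆ insert u p'.toFinset :=
        Finset.Subset.trans (Finset.Subset.trans oplus_subset hsub)
          (Finset.subset_insert _ _)
      have hCSC : StronglyConnected E C :=
        scc_strongly_connected (Finset.mem_insert_self s p.toFinset)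
      rw [hJ'] at hsJ ⊢
      exact sc_subset_scc hCSC hCU hsC hsJ
    · obtain ⟨rfl, heq2⟩ := List.append_inj heq' hlen
      injection heq2 with h4 h5
      subst h4
      rw [hJ']
    · exfalso
      have hsub : (p' ++ [u]).toFinset ⊆ p.toFinset := prefix_toFinset_subset heq'.symm hgt
      rw [toFinset_append_singleton] at hsub
      have : s ∈ insert u p'.toFinset := (hJ' ▸ hsJ : s ∈ _) |> oplus_subset
      exact hsp (List.mem_toFinset.1 (hsub this))
  obtain ⟨h1, h2, h3⟩ := minMem_spec ⟨C, hC𝒮, hsC, minprop⟩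
  exact Finset.Subset.antisymm (h3 C hC𝒮 hsC) (minprop _ h1 h2)

theorem swap_preserves {l l' : List (Fin n)} (h : IsActSeq E l 𝒮) (hsw : SwapRel 𝒮 l l') :
    IsActSeq E l' 𝒮 := by
  obtain ⟨l₁, l₂, a, b, rfl, rfl, hD⟩ := hsw
  obtain ⟨hnd, htf, hfold⟩ := h
  have hperm : List.Perm (l₁ ++ a :: b :: l₂) (l₁ ++ b :: a :: l₂) :=
    List.Perm.append_left l₁ (List.Perm.swap b a l₂)
  set T := l₁.toFinset with hTdef
  set A := scc E (insert a T) a with hA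
  set B := scc E (insert b (insert a T)) b with hB
  have hsplit1 : l₁ ++ a :: b :: l₂ = l₁ ++ a :: (b :: l₂) := rfl
  have hsplit2 : l₁ ++ a :: b :: l₂ = (l₁ ++ [a]) ++ b :: l₂ := by simp
  have hma : minMem 𝒮 a = A := by
    rw [← hfold, minMem_eq hnd hsplit1]; rfl
  have hmb : minMem 𝒮 b = B := by
    rw [← hfold, minMem_eq hnd hsplit2, oplus, toFinset_append_singleton]
  rw [hma, hmb] at hD
  have haA : a ∈ A := self_mem_scc (Finset.mem_insert_self _ _)
  have hbB : b ∈ B := self_mem_scc (Finset.mem_insert_self _ _)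
  have haB : a ∉ B := fun hc => Finset.disjoint_left.1 hD haA hc
  have hcomm : insert b (insert a T) = insert a (insert b T) := Finset.insert_comm _ _ _
  have hBB : B = scc E (insert b T) b := by
    rw [hB, hcomm]
    exact scc_insert_eq (by rw [← hcomm, ← hB]; exact haB) (Finset.mem_insert_self _ _)
  have hbA : b ∉ scc E (insert b (insert a T)) a := by
    intro hb
    have ha' : a ∈ scc E (insert b (insert a T)) b :=
      scc_symm hb (Finset.mem_insert_of_mem (Finset.mem_insert_self a T))
    exact haB ha'
  have hAA : scc E (insert b (insert a T)) a = A := by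
    rw [hA]; exact scc_insert_eq hbA (Finset.mem_insert_self a T)
  -- the two-step folds agree
  set 𝒮r := l₁.foldl (activate E) ∅ with h𝒮r
  have hT : nsupport 𝒮r = T := nsupport_foldl_nil l₁
  have step_a : activate E 𝒮r a = insert A 𝒮r := by rw [activate, hT]; rfl
  have hsupA : nsupport (insert A 𝒮r) = insert a T := by
    rw [nsupport_insert, hT]
    apply Finset.Subset.antisymm
    · exact Finset.union_subset (hA ▸ scc_subset) (Finset.subset_insert _ _)
    · intro x hx
      rcases Finset.mem_insert.1 hx with rfl | hx
      · exact Finset.mem_union_left _ haA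
      · exact Finset.mem_union_right _ hx
  have step_b : activate E (insert A 𝒮r) b = insert B (insert A 𝒮r) := by
    rw [activate, hsupA]; rfl
  have step_b' : activate E 𝒮r b = insert B 𝒮r := by
    rw [activate, hT, hBB]; rfl
  have hsupB : nsupport (insert B 𝒮r) = insert b T := by
    rw [nsupport_insert, hT]
    apply Finset.Subset.antisymm
    · exact Finset.union_subset (hBB ▸ scc_subset) (Finset.subset_insert _ _)
    · intro x hx
      rcases Finset.mem_insert.1 hx with rfl | hx
      · exact Finset.mem_union_left _ hbB
      · exact Finset.mem_union_right _ hx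
  have step_a' : activate E (insert B 𝒮r) a = insert A (insert B 𝒮r) := by
    rw [activate, hsupB, oplus, ← hcomm, hAA]
  have hfold' : (l₁ ++ b :: a :: l₂).foldl (activate E) ∅ = 𝒮 := by
    rw [List.foldl_append, List.foldl_cons, List.foldl_cons, ← h𝒮r, step_b', step_a',
      Finset.insert_comm]
    rw [List.foldl_append, List.foldl_cons, List.foldl_cons, ← h𝒮r, step_a, step_b] at hfold
    exact hfold
  exact ⟨hperm.nodup_iff.1 hnd,
    by rw [← List.toFinset_eq_of_perm _ _ hperm, htf], hfold'⟩

theorem swap_symm {l l' : List (Fin n)} (h : SwapRel 𝒮 l l') : SwapRel 𝒮 l' l := by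
  obtain ⟨l₁, l₂, a, b, h1, h2, hD⟩ := h
  exact ⟨l₁, l₂, b, a, h2, h1, hD.symm⟩

theorem chain_preserves {l l' : List (Fin n)} (hc : Relation.ReflTransGen (SwapRel 𝒮) l l')
    (h : IsActSeq E l 𝒮) : IsActSeq E l' 𝒮 := by
  induction hc with
  | refl => exact h
  | tail _ hstep ih => exact swap_preserves ih hstep

theorem rtg_append {x y : List (Fin n)} (t : Fin n)
    (h : Relation.ReflTransGen (SwapRel 𝒮) x y) :
    Relation.ReflTransGen (SwapRel 𝒮) (x ++ [t]) (y ++ [t]) := by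
  induction h with
  | refl => exact .refl
  | tail _ hstep ih =>
    obtain ⟨l₁, l₂, a, b, h1, h2, hD⟩ := hstep
    exact ih.tail ⟨l₁, l₂ ++ [t], a, b, by rw [h1]; simp, by rw [h2]; simp, hD⟩

theorem bubble (t : Fin n) : ∀ (r q : List (Fin n)),
    (∀ u ∈ r, Disjoint (minMem 𝒮 t) (minMem 𝒮 u)) →
    Relation.ReflTransGen (SwapRel 𝒮) (q ++ t :: r) ((q ++ r) ++ [t])
  | [], q, _ => by
    simp only [List.append_nil]
    exact .refl
  | u :: r', q, hd => by
    have step : SwapRel 𝒮 (q ++ t :: u :: r') (q ++ u :: t :: r') :=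
      ⟨q, r', t, u, rfl, rfl, hd u List.mem_cons_self⟩
    have ih := bubble t r' (q ++ [u]) (fun v hv => hd v (List.mem_cons_of_mem _ hv))
    have e1 : (q ++ [u]) ++ t :: r' = q ++ u :: t :: r' := by simp
    have e2 : ((q ++ [u]) ++ r') = q ++ u :: r' := by simp
    rw [e1, e2] at ih
    exact Relation.ReflTransGen.head step (by simpa using ih)

theorem lift_chain {𝒮' : Finset (Finset (Fin n))} {p z : List (Fin n)}
    (H : ∀ s' ∈ p, minMem 𝒮' s' = minMem 𝒮 s')
    (h : Relation.ReflTransGen (SwapRel 𝒮') p z) :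
    Relation.ReflTransGen (SwapRel 𝒮) p z := by
  suffices hh : Relation.ReflTransGen (SwapRel 𝒮) p z ∧ p.Perm z from hh.1
  induction h with
  | refl => exact ⟨.refl, List.Perm.refl _⟩
  | @tail x y _ hstep ih =>
    obtain ⟨hr, hperm⟩ := ih
    obtain ⟨l₁, l₂, a, b, hx, hy, hD⟩ := hstep
    have ha : a ∈ p := hperm.mem_iff.2 (by rw [hx]; simp)
    have hb : b ∈ p := hperm.mem_iff.2 (by rw [hx]; simp)
    rw [H a ha, H b hb] at hD
    have hpxy : x.Perm y := by
      rw [hx, hy]; exact List.Perm.append_left l₁ (List.Perm.swap b a l₂)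
    exact ⟨hr.tail ⟨l₁, l₂, a, b, hx, hy, hD⟩, hperm.trans hpxy⟩

theorem last_disjoint {l l' p q r : List (Fin n)} {t u : Fin n}
    (hl : IsActSeq E l 𝒮) (hl' : IsActSeq E l' 𝒮)
    (hlp : l = p ++ [t]) (hl'q : l' = q ++ t :: r) (hu : u ∈ r) :
    Disjoint (minMem 𝒮 t) (minMem 𝒮 u) := by
  obtain ⟨hnd, htf, hfold⟩ := hl
  obtain ⟨hnd', htf', hfold'⟩ := hl'
  have hMt : minMem 𝒮 t = oplus E p.toFinset t := by
    rw [← hfold, minMem_eq hnd hlp]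
  have hMt' : minMem 𝒮 t = oplus E q.toFinset t := by
    rw [← hfold', minMem_eq hnd' hl'q]
  have htp : t ∉ p := by
    rw [hlp] at hnd
    exact fun hs => (List.disjoint_of_nodup_append hnd) hs List.mem_cons_self
  have hunel' : u ∈ l' := by rw [hl'q]; exact List.mem_append_right _ (List.mem_cons_of_mem _ hu)
  have hut : u ≠ t := by
    rintro rfl
    rw [hl'q] at hnd'
    exact (List.nodup_cons.1 (List.nodup_append.1 hnd').2.1).1 hu
  have hup : u ∈ p := by
    have : u ∈ l.toFinset := by rw [htf, ← htf']; exact List.mem_toFinset.2 hunel'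
    rw [hlp] at this
    rcases List.mem_append.1 (List.mem_toFinset.1 this) with h | h
    · exact h
    · simp at h; exact absurd h hut
  obtain ⟨p₁, p₂, rfl⟩ := List.append_of_mem hup
  have hsplitu : l = p₁ ++ u :: (p₂ ++ [t]) := by rw [hlp]; simp
  have hMu : minMem 𝒮 u = oplus E p₁.toFinset u := by
    rw [← hfold, minMem_eq hnd hsplitu]
  -- t ∉ M_u
  have htMu : t ∉ minMem 𝒮 u := by
    rw [hMu]
    intro hc
    have := oplus_subset hc
    rcases Finset.mem_insert.1 this with h | h
    · exact hut h.symm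
    · exact htp (List.mem_append_left _ (List.mem_toFinset.1 h))
  -- u ∉ M_t
  have huMt : u ∉ minMem 𝒮 t := by
    rw [hMt']
    intro hc
    have := oplus_subset hc
    rcases Finset.mem_insert.1 this with h | h
    · exact hut h
    · rw [hl'q] at hnd'
      exact (List.disjoint_of_nodup_append hnd') (List.mem_toFinset.1 h)
        (List.mem_cons_of_mem _ hu)
  by_contra hcon
  obtain ⟨w, hw1, hw2⟩ := Finset.not_disjoint_iff.1 hcon
  -- M_u is strongly connected and contained in insert t p.toFinset
  have hMuSC : StronglyConnected E (minMem 𝒮 u) := by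
    rw [hMu]; exact scc_strongly_connected (Finset.mem_insert_self _ _)
  have hMusub : minMem 𝒮 u ⊆ insert t (p₁ ++ u :: p₂).toFinset := by
    rw [hMu]
    refine Finset.Subset.trans oplus_subset ?_
    intro x hx
    rcases Finset.mem_insert.1 hx with rfl | hx
    · exact Finset.mem_insert_of_mem (by simp)
    · exact Finset.mem_insert_of_mem (by
        rw [List.mem_toFinset] at hx ⊢
        exact List.mem_append_left _ hx)
  have hsub : minMem 𝒮 u ⊆ minMem 𝒮 t := by
    rw [hMt]
    exact sc_subset_scc hMuSC hMusub hw2 (by rw [hMt] at hw1; exact hw1)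
  exact huMt (hsub (by rw [hMu]; exact mem_oplus))

theorem actseq_nil_right {l' : List (Fin n)} (hl' : IsActSeq E l' ∅) : l' = [] := by
  have h := hl'.2.1
  have hsup : nsupport (∅ : Finset (Finset (Fin n))) = ∅ := by simp [nsupport]
  rw [hsup] at h
  exact (List.toFinset_eq_empty_iff l').1 h

theorem conn (N : ℕ) : ∀ (𝒮 : Finset (Finset (Fin n))) (l l' : List (Fin n)),
    l.length ≤ N → IsActSeq E l 𝒮 → IsActSeq E l' 𝒮 →
    Relation.ReflTransGen (SwapRel 𝒮) l l' := by
  induction N with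
  | zero =>
    intro 𝒮 l l' hlen hl hl'
    have hl0 : l = [] := List.eq_nil_of_length_eq_zero (Nat.le_zero.1 hlen)
    subst hl0
    have h𝒮 : 𝒮 = ∅ := hl.2.2.symm
    subst h𝒮
    rw [actseq_nil_right hl']
  | succ N ih =>
    intro 𝒮 l l' hlen hl hl'
    rcases l.eq_nil_or_concat' with rfl | ⟨p, t, rfl⟩
    · have h𝒮 : 𝒮 = ∅ := hl.2.2.symm
      subst h𝒮
      rw [actseq_nil_right hl']
    · have hnd := hl.1
      have ht' : t ∈ l' := by
        have h1 : t ∈ (p ++ [t]).toFinset := by simp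
        rw [hl.2.1, ← hl'.2.1] at h1
        exact List.mem_toFinset.1 h1
      obtain ⟨q, r, rfl⟩ := List.append_of_mem ht'
      have hdisj : ∀ u ∈ r, Disjoint (minMem 𝒮 t) (minMem 𝒮 u) :=
        fun u hu => last_disjoint hl hl' rfl rfl hu
      have hbub := bubble (𝒮 := 𝒮) t r q hdisj
      have hl'' : IsActSeq E ((q ++ r) ++ [t]) 𝒮 := chain_preserves hbub hl'
      have hfold : 𝒮 = insert (oplus E p.toFinset t) (p.foldl (activate E) ∅) := by
        conv_lhs => rw [← hl.2.2]
        rw [List.foldl_append]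
        simp only [List.foldl_cons, List.foldl_nil]
        rw [activate, nsupport_foldl_nil]
      have hfold' : 𝒮 = insert (oplus E (q ++ r).toFinset t) ((q ++ r).foldl (activate E) ∅) := by
        conv_lhs => rw [← hl''.2.2]
        rw [List.foldl_append]
        simp only [List.foldl_cons, List.foldl_nil]
        rw [activate, nsupport_foldl_nil]
      have hM : oplus E p.toFinset t = minMem 𝒮 t := by
        conv_rhs => rw [← hl.2.2]
        exact (minMem_eq hnd rfl).symm
      have hM' : oplus E (q ++ r).toFinset t = minMem 𝒮 t := by
        conv_rhs => rw [← hl''.2.2]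
        exact (minMem_eq hl''.1 rfl).symm
      rw [hM] at hfold
      rw [hM'] at hfold'
      have htM : t ∈ minMem 𝒮 t := hM ▸ mem_oplus
      have htp : t ∉ p.toFinset := by
        rw [List.mem_toFinset]
        exact fun hc => (List.disjoint_of_nodup_append hnd) hc List.mem_cons_self
      have htqr : t ∉ (q ++ r).toFinset := by
        rw [List.mem_toFinset]
        exact fun hc => (List.disjoint_of_nodup_append hl''.1) hc List.mem_cons_self
      have hMp : minMem 𝒮 t ∉ p.foldl (activate E) ∅ := by
        intro hc
        have h2 := subset_nsupport hc htM
        rw [nsupport_foldl_nil] at h2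
        exact htp h2
      have hMq : minMem 𝒮 t ∉ (q ++ r).foldl (activate E) ∅ := by
        intro hc
        have h2 := subset_nsupport hc htM
        rw [nsupport_foldl_nil] at h2
        exact htqr h2
      have hpq : p.foldl (activate E) ∅ = (q ++ r).foldl (activate E) ∅ := by
        rw [← Finset.erase_insert hMp, ← Finset.erase_insert hMq, ← hfold, ← hfold']
      have hIp : IsActSeq E p (p.foldl (activate E) ∅) :=
        ⟨(List.nodup_append.1 hnd).1, (nsupport_foldl_nil p).symm, rfl⟩
      have hIq : IsActSeq E (q ++ r) (p.foldl (activate E) ∅) :=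
        ⟨(List.nodup_append.1 hl''.1).1, by rw [hpq]; exact (nsupport_foldl_nil _).symm,
          hpq.symm⟩
      have hlenp : p.length ≤ N := by
        have h3 : (p ++ [t]).length = p.length + 1 := by simp
        omega
      have hchain := ih (p.foldl (activate E) ∅) p (q ++ r) hlenp hIp hIq
      have H : ∀ s' ∈ p, minMem (p.foldl (activate E) ∅) s' = minMem 𝒮 s' := by
        intro s' hs'
        obtain ⟨p₁, p₂, rfl⟩ := List.append_of_mem hs'
        conv_rhs => rw [← hl.2.2]
        rw [minMem_eq (List.nodup_append.1 hnd).1 rfl,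
          minMem_eq hnd (show (p₁ ++ s' :: p₂) ++ [t] = p₁ ++ s' :: (p₂ ++ [t]) by simp)]
      have hchain2 := lift_chain H hchain
      have hchain3 := rtg_append t hchain2
      have hsymm : Relation.ReflTransGen (SwapRel 𝒮) ((q ++ r) ++ [t]) (q ++ t :: r) :=
        (@Relation.ReflTransGen.stdSymm _ (SwapRel 𝒮) ⟨fun _ _ h => swap_symm h⟩).symm _ _ hbub
      exact hchain3.trans hsymm

end AuxLemmas

/-- Swapping an exchangeable adjacent pair in an activation sequence yields an activation
sequence for the same maximal nested collection; moreover any two activation sequences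
yielding the same maximal nested collection are connected by such swaps. -/
theorem stmt3 (n : ℕ) (E : Fin n → Fin n → Prop) (hE : ∀ i, ¬ E i i)
    (𝒮 : Finset (Finset (Fin n))) (h𝒮 : MaximalNested E 𝒮) :
    (∀ l l' : List (Fin n), IsActSeq E l 𝒮 → SwapRel 𝒮 l l' → IsActSeq E l' 𝒮) ∧
    (∀ l l' : List (Fin n), IsActSeq E l 𝒮 → IsActSeq E l' 𝒮 →
      Relation.ReflTransGen (SwapRel 𝒮) l l') := by
  refine ⟨fun l l' h hsw => swap_preserves h hsw, fun l l' h h' => ?_⟩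
  exact conn l.length 𝒮 l l' le_rfl h h'
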